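/- In the MAN PDA B for K' users with parameter t, one can remove floor(K'/(t+1))·(Z−Z') integer entries (i.e., choose a set T of symbols with |T| = floor(K'/(t+1))·(Z−Z')) such that each column of B contains at most Z−Z' symbols from T, whenever Z−Z' ≤ C(K'−1,t), where Z' = C(K'−1,t−1). -/

import Mathlib

open Finset

private def degT {K : ℕ} (T : Finset (Finset (Fin K))) (j : Fin K) : ℕ :=
  (T.filter (fun U => j ∈ U)).card

private lemma sum_degT {K : ℕ} (T : Finset (Finset (Fin K))) :
    ∑ j : Fin K, degT T j = ∑ U ∈ T, U.card := by
  unfold degT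
  simp only [card_filter]
  rw [Finset.sum_comm]
  refine Finset.sum_congr rfl (fun U _ => ?_)
  rw [← card_filter]
  congr 1
  ext j; simp

private lemma key (K t n : ℕ) (p : ℕ) :
    ∀ T : Finset (Finset (Fin K)),
      (∀ U ∈ T, U.card = t + 1) → T.card * (t + 1) ≤ K * n →
      (∑ j : Fin K, (degT T j - n)) = p →
      ∃ T' : Finset (Finset (Fin K)),
        (∀ U ∈ T', U.card = t + 1) ∧ (∀ j, degT T' j ≤ n) ∧ T'.card = T.card := by
  induction p using Nat.strong_induction_on with
  | _ p ih =>
    intro T hsize hcount hp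
    by_cases h0 : ∑ j : Fin K, (degT T j - n) = 0
    · refine ⟨T, hsize, fun j => ?_, rfl⟩
      have := (Finset.sum_eq_zero_iff.mp h0) j (mem_univ j)
      omega
    · obtain ⟨j, -, hjpos⟩ : ∃ j ∈ (univ : Finset (Fin K)), 0 < degT T j - n := by
        by_contra hc; push_neg at hc
        exact h0 (Finset.sum_eq_zero (fun j hj => Nat.eq_zero_of_le_zero (hc j hj)))
      have hj : n < degT T j := by omega
      have hsum1 : ∑ k : Fin K, degT T k ≤ K * n := by
        rw [sum_degT]
        calc ∑ U ∈ T, U.card = ∑ U ∈ T, (t + 1) := Finset.sum_congr rfl hsize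
          _ = T.card * (t + 1) := by rw [Finset.sum_const, smul_eq_mul]
          _ ≤ K * n := hcount
      obtain ⟨j', hj'⟩ : ∃ j' : Fin K, degT T j' < n := by
        by_contra hc; push_neg at hc
        have h2 : K * n < ∑ k : Fin K, degT T k := by
          have := Finset.sum_lt_sum (f := fun _ : Fin K => n) (g := degT T)
            (fun i _ => hc i) ⟨j, mem_univ j, hj⟩
          simpa [Finset.sum_const, Finset.card_univ, mul_comm] using this
        omega
      have hjj' : j ≠ j' := by
        intro h; rw [h] at hj; omega
      -- find a swappable U
      have hswap : ∃ U ∈ T, j ∈ U ∧ j' ∉ U ∧ insert j' (U.erase j) ∉ T := by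
        by_contra hc; push_neg at hc
        set A := T.filter (fun U => j ∈ U ∧ j' ∉ U) with hA
        set B := T.filter (fun U => j' ∈ U ∧ j ∉ U) with hB
        have hmaps : ∀ U ∈ A, insert j' (U.erase j) ∈ B := by
          intro U hU
          rw [hA, mem_filter] at hU
          obtain ⟨hUT, hjU, hj'U⟩ := hU
          rw [hB, mem_filter]
          refine ⟨hc U hUT hjU hj'U, mem_insert_self _ _, ?_⟩
          simp [hjj', Finset.mem_erase]
        have hrec : ∀ U ∈ A, insert j ((insert j' (U.erase j)).erase j') = U := by
          intro U hU
          rw [hA, mem_filter] at hU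
          obtain ⟨hUT, hjU, hj'U⟩ := hU
          rw [Finset.erase_insert (by simp [Finset.mem_erase]; tauto),
            Finset.insert_erase hjU]
        have hcard : A.card ≤ B.card := by
          apply Finset.card_le_card_of_injOn (fun U => insert j' (U.erase j)) (fun U hU => hmaps U hU)
          intro U hU V hV h
          rw [Finset.mem_coe] at hU hV
          have h2 := hrec U hU
          simp only at h
          rw [h, hrec V hV] at h2
          exact h2.symm
        have h1 : (T.filter (fun U => j ∈ U ∧ j' ∈ U)).card + A.card = degT T j := by
          rw [hA, degT, ← Finset.filter_filter, ← Finset.filter_filter]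
          exact Finset.card_filter_add_card_filter_not _
        have h2 : (T.filter (fun U => j ∈ U ∧ j' ∈ U)).card + B.card = degT T j' := by
          rw [hB, degT]
          have : T.filter (fun U => j ∈ U ∧ j' ∈ U)
              = T.filter (fun U => j' ∈ U ∧ j ∈ U) := by
            apply Finset.filter_congr; intro U _; simp [and_comm]
          rw [this, ← Finset.filter_filter, ← Finset.filter_filter]
          exact Finset.card_filter_add_card_filter_not _
        omega
      obtain ⟨U, hUT, hjU, hj'U, hVnT⟩ := hswap
      set V := insert j' (U.erase j) with hV
      have hj'eU : j' ∉ U.erase j := fun h => hj'U (Finset.mem_of_mem_erase h)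
      have hjV : j ∉ V := by simp [hV, hjj', Finset.mem_erase]
      have hj'V : j' ∈ V := mem_insert_self _ _
      have hVcard : V.card = t + 1 := by
        rw [hV, Finset.card_insert_of_notMem hj'eU, Finset.card_erase_of_mem hjU,
          hsize U hUT]
        omega
      have hVneU : V ∉ T.erase U := fun h => hVnT (Finset.mem_of_mem_erase h)
      set T' := insert V (T.erase U) with hT'
      have hTpos : 0 < T.card := Finset.card_pos.mpr ⟨U, hUT⟩
      have hT'card : T'.card = T.card := by
        rw [hT', Finset.card_insert_of_notMem hVneU, Finset.card_erase_of_mem hUT]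
        omega
      have hT'size : ∀ W ∈ T', W.card = t + 1 := by
        intro W hW
        rw [hT', mem_insert] at hW
        rcases hW with h | h
        · rw [h]; exact hVcard
        · exact hsize W (Finset.mem_of_mem_erase h)
      have hmemV : ∀ k : Fin K, k ≠ j → k ≠ j' → (k ∈ V ↔ k ∈ U) := by
        intro k hkj hkj'
        simp [hV, Finset.mem_insert, Finset.mem_erase, hkj, hkj']
      have hdegT' : ∀ k : Fin K,
          degT T' k = if k = j then degT T j - 1
            else if k = j' then degT T j' + 1 else degT T k := by
        intro k
        have hfe : (T.erase U).filter (fun W => k ∈ W)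
            = (T.filter (fun W => k ∈ W)).erase U := by
          ext W; simp [Finset.mem_erase, Finset.mem_filter]; tauto
        by_cases hkj : k = j
        · subst hkj
          rw [degT, hT', Finset.filter_insert, if_neg hjV, hfe, if_pos rfl,
            Finset.card_erase_of_mem (by simp [Finset.mem_filter, hUT, hjU]), degT]
        · rw [if_neg hkj]
          by_cases hkj' : k = j'
          · subst hkj'
            rw [degT, hT', Finset.filter_insert, if_pos hj'V, hfe, if_pos rfl,
              Finset.erase_eq_of_notMem (by simp [Finset.mem_filter, hj'U]),
              Finset.card_insert_of_notMem (by simp [Finset.mem_filter, hVnT]), degT]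
          · rw [if_neg hkj']
            by_cases hkU : k ∈ U
            · have hkV : k ∈ V := (hmemV k hkj hkj').mpr hkU
              rw [degT, hT', Finset.filter_insert, if_pos hkV, hfe,
                Finset.card_insert_of_notMem (by simp [Finset.mem_filter, hVnT]),
                Finset.card_erase_of_mem (by simp [Finset.mem_filter, hUT, hkU]), degT]
              have : 0 < (T.filter (fun W => k ∈ W)).card :=
                Finset.card_pos.mpr ⟨U, by simp [Finset.mem_filter, hUT, hkU]⟩
              omega
            · have hkV : k ∉ V := fun h => hkU ((hmemV k hkj hkj').mp h)
              rw [degT, hT', Finset.filter_insert, if_neg hkV, hfe,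
                Finset.erase_eq_of_notMem (by simp [Finset.mem_filter, hkU]), degT]
      have hlt : ∑ k : Fin K, (degT T' k - n) < ∑ k : Fin K, (degT T k - n) := by
        apply Finset.sum_lt_sum
        · intro i _
          rw [hdegT' i]
          by_cases h1 : i = j
          · simp only [if_pos h1]; subst h1; omega
          · rw [if_neg h1]
            by_cases h2 : i = j'
            · simp only [if_pos h2]; subst h2; omega
            · rw [if_neg h2]
        · refine ⟨j, mem_univ j, ?_⟩
          rw [hdegT' j, if_pos rfl]; omega
      obtain ⟨T'', h1, h2, h3⟩ := ih _ (hp ▸ hlt) T' hT'size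
        (by rw [hT'card]; exact hcount) rfl
      exact ⟨T'', h1, h2, by rw [h3, hT'card]⟩

theorem man_pda_symbol_removal (K' t Z Z' : ℕ) (ht : 1 ≤ t) (htK : t < K')
    (hZ' : Z' = (K' - 1).choose (t - 1)) (hZZ' : Z' ≤ Z)
    (hbound : Z - Z' ≤ (K' - 1).choose t) :
    ∃ T : Finset (Finset (Fin K')),
      (∀ U ∈ T, U.card = t + 1) ∧
      (∀ j : Fin K', (T.filter (fun U => j ∈ U)).card ≤ Z - Z') ∧
      T.card = (K' / (t + 1)) * (Z - Z') := by
  set n := Z - Z' with hn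
  set m := K' / (t + 1) with hm
  have hK'pos : 0 < K' := lt_of_le_of_lt (Nat.zero_le t) htK
  have hid : K' * (K' - 1).choose t = K'.choose (t + 1) * (t + 1) := by
    have h := Nat.add_one_mul_choose_eq (K' - 1) t
    rwa [show K' - 1 + 1 = K' from by omega] at h
  have hm1 : m * (t + 1) ≤ K' := Nat.div_mul_le_self K' (t + 1)
  have hmn : m * n ≤ K'.choose (t + 1) := by
    have h1 : m * n * (t + 1) ≤ K'.choose (t + 1) * (t + 1) := by
      calc m * n * (t + 1) = m * (t + 1) * n := by ring
        _ ≤ K' * n := Nat.mul_le_mul_right n hm1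
        _ ≤ K' * (K' - 1).choose t := Nat.mul_le_mul_left K' hbound
        _ = K'.choose (t + 1) * (t + 1) := hid
    exact Nat.le_of_mul_le_mul_right h1 (Nat.succ_pos t)
  obtain ⟨T₀, hT₀sub, hT₀card⟩ :=
    Finset.exists_subset_card_eq (s := Finset.powersetCard (t + 1) (univ : Finset (Fin K')))
      (n := m * n) (by rwa [Finset.card_powersetCard, Finset.card_univ, Fintype.card_fin])
  have hT₀size : ∀ U ∈ T₀, U.card = t + 1 := by
    intro U hU
    exact (Finset.mem_powersetCard.mp (hT₀sub hU)).2
  have hcount : T₀.card * (t + 1) ≤ K' * n := by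
    rw [hT₀card]
    calc m * n * (t + 1) = m * (t + 1) * n := by ring
      _ ≤ K' * n := Nat.mul_le_mul_right n hm1
  obtain ⟨T, hs, hd, hc⟩ := key K' t n _ T₀ hT₀size hcount rfl
  exact ⟨T, hs, hd, by rw [hc, hT₀card]⟩
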